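/- Let θ₁, θ₂ ∈ H^∞(D) with |θ₁(e^{it})|² + |θ₂(e^{it})|² = 1 a.e. on the unit circle, and let S = {(θ₁f, θ₂f) : f ∈ H²(D)} ⊆ H²(D) ⊕ H²(D). Then S is a closed subspace invariant under M_z ⊕ M_z, and the compression of M_z ⊕ M_z to the quotient (H²(D) ⊕ H²(D))/S is an isometry if and only if S is a reducing subspace of M_z ⊕ M_z, which holds if and only if θ₁ and θ₂ are constant functions. -/

import Mathlib

set_option synthInstance.maxHeartbeats 1000000

open Metric

noncomputable section

/-- The Hardy space `H²(𝔻)`, modeled as `ℓ²(ℕ)` of Taylor coefficients. -/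
abbrev H2 := lp (fun _ : ℕ => ℂ) 2

/-- `H²(𝔻) ⊕ H²(𝔻)` with its Hilbert-space (`ℓ²`) norm. -/
abbrev HH := WithLp 2 (H2 × H2)

/-- The subspace `S = {(θ₁ f, θ₂ f) : f ∈ H²(𝔻)}`, i.e. the range of
`f ↦ (M₁ f, M₂ f)` where `Mᵢ` is multiplication by `θᵢ`. -/
def Smod (M₁ M₂ : H2 →L[ℂ] H2) : Submodule ℂ HH :=
  LinearMap.range ((WithLp.linearEquiv 2 ℂ (H2 × H2)).symm.toLinearMap ∘ₗ
    ((M₁ : H2 →ₗ[ℂ] H2).prod (M₂ : H2 →ₗ[ℂ] H2)))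

namespace Stmt12Aux

local notation "⟪" x ", " y "⟫" => @inner ℂ _ _ x y

/-- the constant function 1 -/
def e0 : H2 := lp.single 2 0 1

lemma e0_apply_zero : e0 0 = 1 := lp.single_apply_self 2 0 1

lemma e0_apply_ne {n : ℕ} (hn : n ≠ 0) : e0 n = 0 := lp.single_apply_ne 2 0 1 hn

lemma norm_coeff_le (f : H2) (n : ℕ) : ‖f n‖ ≤ ‖f‖ :=
  lp.norm_apply_le_norm (by norm_num) f n

lemma summable_coeff (f : H2) {z : ℂ} (hz : ‖z‖ < 1) :
    Summable fun n => f n * z ^ n := by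
  refine Summable.of_norm ?_
  refine Summable.of_nonneg_of_le (fun n => norm_nonneg _)
    (fun n => ?_) ((summable_geometric_of_lt_one (norm_nonneg z) hz).mul_left ‖f‖)
  rw [norm_mul, norm_pow]
  exact mul_le_mul_of_nonneg_right (norm_coeff_le f n)
    (pow_nonneg (norm_nonneg z) n)

lemma tsum_e0 {z : ℂ} : (∑' n : ℕ, e0 n * z ^ n) = 1 := by
  rw [tsum_eq_single 0 (fun n hn => by rw [e0_apply_ne hn, zero_mul])]
  simp [e0_apply_zero]

/-- power series representation -/
lemma hasFPS (f : H2) :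
    HasFPowerSeriesOnBall (fun z : ℂ => ∑' n : ℕ, f n * z ^ n)
      (FormalMultilinearSeries.ofScalars ℂ (fun n => f n)) 0 1 := by
  constructor
  · apply FormalMultilinearSeries.le_radius_of_bound _ ‖f‖ (r := 1)
    intro n
    rw [FormalMultilinearSeries.ofScalars_norm]
    simpa using norm_coeff_le f n
  · exact one_pos
  · intro y hy
    rw [EMetric.mem_ball, edist_zero_right] at hy
    have hy' : ‖y‖ < 1 := by simpa [← ofReal_norm] using hy
    have := (summable_coeff f hy').hasSum
    simp only [zero_add]
    convert this using 2 with n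
    · rfl
    rw [FormalMultilinearSeries.ofScalars_apply_eq]
    simp [mul_comm]

/-- uniqueness of power series coefficients -/
lemma coeff_eq {f g : H2}
    (h : ∀ z ∈ ball (0:ℂ) 1, (∑' n : ℕ, f n * z ^ n) = ∑' n : ℕ, g n * z ^ n) :
    f = g := by
  have h1 := (hasFPS f).hasFPowerSeriesAt
  have h2 := (hasFPS g).hasFPowerSeriesAt
  have heq : ∀ᶠ z in nhds (0:ℂ), (∑' n : ℕ, f n * z ^ n) = ∑' n : ℕ, g n * z ^ n := by
    filter_upwards [Metric.ball_mem_nhds (0:ℂ) one_pos] using h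
  have := h1.eq_formalMultilinearSeries_of_eventually h2 heq
  have := (FormalMultilinearSeries.ofScalars_series_eq_iff ℂ _ _).mp this
  exact lp.ext (funext fun n => congrFun this n)


section Shift
variable (Sh : H2 →ₗᵢ[ℂ] H2)

variable (hSh : ∀ f : H2, (Sh f) 0 = 0 ∧ ∀ n : ℕ, (Sh f) (n + 1) = f n)

include hSh

lemma tsum_shift (f : H2) {z : ℂ} (hz : ‖z‖ < 1) :
    (∑' n : ℕ, (Sh f) n * z ^ n) = z * ∑' n : ℕ, f n * z ^ n := by
  rw [Summable.tsum_eq_zero_add (summable_coeff (Sh f) hz)]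
  rw [(hSh f).1, zero_mul, zero_add]
  have : ∀ n : ℕ, (Sh f) (n + 1) * z ^ (n + 1) = z * (f n * z ^ n) := by
    intro n
    rw [(hSh f).2 n, pow_succ]
    ring
  rw [tsum_congr this, tsum_mul_left]

/-- commutation of a multiplication operator with the shift -/
lemma comm_shift (θ : ℂ → ℂ) (M : H2 →L[ℂ] H2)
    (hM : ∀ f : H2, ∀ z ∈ ball (0:ℂ) 1,
      (∑' n : ℕ, (M f) n * z ^ n) = θ z * ∑' n : ℕ, f n * z ^ n) (f : H2) :
    M (Sh f) = Sh (M f) := by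
  apply coeff_eq
  intro z hz
  have hz' : ‖z‖ < 1 := by simpa [mem_ball, dist_zero_right] using hz
  rw [hM _ z hz, tsum_shift Sh hSh f hz', tsum_shift Sh hSh (M f) hz', hM _ z hz]
  ring

omit hSh in
/-- backward shift -/
def B (f : H2) : H2 :=
  ⟨fun n => f (n + 1), by
    apply memℓp_gen
    have h2 : (0:ℝ) < ENNReal.toReal 2 := by norm_num
    have := (lp.memℓp f).summable h2
    exact this.comp_injective (add_left_injective 1)⟩

omit hSh in
lemma B_apply (f : H2) (n : ℕ) : B f n = f (n + 1) := rfl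

lemma sh_B (f : H2) : Sh (B f) = f - f 0 • e0 := by
  apply lp.ext
  funext n
  rcases n with _ | n
  · simp only [lp.coeFn_sub, lp.coeFn_smul, Pi.sub_apply, Pi.smul_apply, (hSh (B f)).1,
      e0_apply_zero, smul_eq_mul, mul_one]
    ring
  · simp only [lp.coeFn_sub, lp.coeFn_smul, Pi.sub_apply, Pi.smul_apply, (hSh (B f)).2 n,
      B_apply, e0_apply_ne (Nat.succ_ne_zero n), smul_eq_mul, mul_zero, sub_zero]

omit hSh in
lemma inner_e0_left (f : H2) : ⟪e0, f⟫ = f 0 := by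
  rw [e0, lp.inner_single_left]
  simp

omit hSh in
lemma inner_e0_right (f : H2) : ⟪f, e0⟫ = starRingEnd ℂ (f 0) := by
  rw [e0, lp.inner_single_right]
  simp [RCLike.inner_apply]

lemma decomp (f : H2) : f = f 0 • e0 + Sh (B f) := by
  rw [sh_B Sh hSh]; abel

/-- adjoint relation for the shift -/
lemma inner_sh (g y : H2) : ⟪Sh g, y⟫ = ⟪g, B y⟫ := by
  conv_lhs => rw [decomp Sh hSh y]
  rw [inner_add_right, inner_smul_right, inner_e0_right, (hSh g).1,
    map_zero, mul_zero, zero_add, Sh.inner_map_map]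

lemma inner_sh_zero (g y : H2) : ⟪Sh g, y 0 • e0⟫ = 0 := by
  rw [inner_smul_right, inner_e0_right, (hSh g).1, map_zero, mul_zero]

end Shift

end Stmt12Aux

set_option maxHeartbeats 4000000 in
open Stmt12Aux in
/-- Let `θ₁, θ₂` be bounded holomorphic functions on the disk with
`|θ₁|² + |θ₂|² = 1` a.e. on the circle — equivalently, `f ↦ (θ₁ f, θ₂ f)` is an isometry
of `H²(𝔻)` into `H²(𝔻) ⊕ H²(𝔻)` (hypothesis `hiso`).  Here `H²(𝔻)` is modeled as `ℓ²(ℕ)`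
via Taylor coefficients, `Sh` is the shift `M_z`, `Mᵢ` is multiplication by `θᵢ`, and
`V = M_z ⊕ M_z`.  Then `S = {(θ₁ f, θ₂ f)}` is a closed subspace invariant under `V`, the
compression of `V` to `S^⊥` (the quotient by `S`) is an isometry iff `S` reduces `V`, and
this holds iff `θ₁` and `θ₂` are constant on the disk. -/
theorem stmt12
    (Sh : H2 →ₗᵢ[ℂ] H2)
    (hSh : ∀ f : H2, (Sh f) 0 = 0 ∧ ∀ n : ℕ, (Sh f) (n + 1) = f n)
    (θ₁ θ₂ : ℂ → ℂ)
    (hθ₁d : DifferentiableOn ℂ θ₁ (ball (0:ℂ) 1))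
    (hθ₂d : DifferentiableOn ℂ θ₂ (ball (0:ℂ) 1))
    (hθ₁b : ∃ C : ℝ, ∀ z ∈ ball (0:ℂ) 1, ‖θ₁ z‖ ≤ C)
    (hθ₂b : ∃ C : ℝ, ∀ z ∈ ball (0:ℂ) 1, ‖θ₂ z‖ ≤ C)
    (M₁ M₂ : H2 →L[ℂ] H2)
    (hM₁ : ∀ f : H2, ∀ z ∈ ball (0:ℂ) 1,
      (∑' n : ℕ, (M₁ f) n * z ^ n) = θ₁ z * ∑' n : ℕ, f n * z ^ n)
    (hM₂ : ∀ f : H2, ∀ z ∈ ball (0:ℂ) 1,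
      (∑' n : ℕ, (M₂ f) n * z ^ n) = θ₂ z * ∑' n : ℕ, f n * z ^ n)
    (hiso : ∀ f : H2, ‖M₁ f‖ ^ 2 + ‖M₂ f‖ ^ 2 = ‖f‖ ^ 2)
    (V : HH →ₗᵢ[ℂ] HH)
    (hV : ∀ x : HH, WithLp.equiv 2 (H2 × H2) (V x) =
      (Sh (WithLp.equiv 2 (H2 × H2) x).1, Sh (WithLp.equiv 2 (H2 × H2) x).2)) :
    IsClosed ((Smod M₁ M₂ : Submodule ℂ HH) : Set HH) ∧
    (∀ x ∈ Smod M₁ M₂, V x ∈ Smod M₁ M₂) ∧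
    ((∀ x ∈ (Smod M₁ M₂)ᗮ, ‖Submodule.orthogonalProjectionOnto (Smod M₁ M₂)ᗮ (V x)‖ = ‖x‖) ↔
      ((∀ x ∈ Smod M₁ M₂, V x ∈ Smod M₁ M₂) ∧
        ∀ x ∈ (Smod M₁ M₂)ᗮ, V x ∈ (Smod M₁ M₂)ᗮ)) ∧
    (((∀ x ∈ Smod M₁ M₂, V x ∈ Smod M₁ M₂) ∧
        ∀ x ∈ (Smod M₁ M₂)ᗮ, V x ∈ (Smod M₁ M₂)ᗮ) ↔
      ((∃ c : ℂ, ∀ z ∈ ball (0:ℂ) 1, θ₁ z = c) ∧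
        ∃ c : ℂ, ∀ z ∈ ball (0:ℂ) 1, θ₂ z = c)) := by
  classical
  have hcomm₁ : ∀ f : H2, M₁ (Sh f) = Sh (M₁ f) := comm_shift Sh hSh θ₁ M₁ hM₁
  have hcomm₂ : ∀ f : H2, M₂ (Sh f) = Sh (M₂ f) := comm_shift Sh hSh θ₂ M₂ hM₂
  set S := Smod M₁ M₂ with hSdef
  set Wl : H2 →ₗ[ℂ] HH := (WithLp.linearEquiv 2 ℂ (H2 × H2)).symm.toLinearMap ∘ₗ
    ((M₁ : H2 →ₗ[ℂ] H2).prod (M₂ : H2 →ₗ[ℂ] H2)) with hWldef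
  have hS_range : S = LinearMap.range Wl := rfl
  have hWfst : ∀ f : H2, (Wl f).fst = M₁ f := fun _ => rfl
  have hWsnd : ∀ f : H2, (Wl f).snd = M₂ f := fun _ => rfl
  have hWn : ∀ f : H2, ‖Wl f‖ = ‖f‖ := by
    intro f
    have h1 : ‖Wl f‖ ^ 2 = ‖f‖ ^ 2 := by
      rw [WithLp.prod_norm_sq_eq_of_L2, hWfst, hWsnd]
      exact hiso f
    have := congrArg Real.sqrt h1
    rwa [Real.sqrt_sq (norm_nonneg _), Real.sqrt_sq (norm_nonneg _)] at this
  set W : H2 →ₗᵢ[ℂ] HH := ⟨Wl, hWn⟩ with hWdef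
  have hVfst : ∀ x : HH, (V x).fst = Sh x.fst := fun x => congrArg Prod.fst (hV x)
  have hVsnd : ∀ x : HH, (V x).snd = Sh x.snd := fun x => congrArg Prod.snd (hV x)
  have hVW : ∀ f : H2, V (Wl f) = Wl (Sh f) := by
    intro f
    have h1 : (V (Wl f)).fst = (Wl (Sh f)).fst := by
      rw [hVfst, hWfst, hWfst, hcomm₁]
    have h2 : (V (Wl f)).snd = (Wl (Sh f)).snd := by
      rw [hVsnd, hWsnd, hWsnd, hcomm₂]
    exact WithLp.ofLp_injective 2 (Prod.ext h1 h2)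
  have hWinner : ∀ u v : H2,
      (inner ℂ (M₁ u) (M₁ v) : ℂ) + inner ℂ (M₂ u) (M₂ v) = inner ℂ u v := by
    intro u v
    have := W.inner_map_map u v
    rwa [show (W u) = Wl u from rfl, show (W v) = Wl v from rfl,
      WithLp.prod_inner_apply, WithLp.ofLp_fst, WithLp.ofLp_fst, WithLp.ofLp_snd, WithLp.ofLp_snd, hWfst, hWfst, hWsnd, hWsnd] at this
  have hclosed : IsClosed (S : Set HH) := by
    have h1 : (S : Set HH) = Set.range W := by
      rw [hS_range, LinearMap.coe_range]; rfl
    rw [h1]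
    exact W.isometry.isClosedEmbedding.isClosed_range
  have hinvS : ∀ x ∈ S, V x ∈ S := by
    rw [hS_range]
    rintro x ⟨f, rfl⟩
    exact ⟨Sh f, (hVW f).symm⟩
  haveI : CompleteSpace S := hclosed.completeSpace_coe
  have hSbot : Sᗮᗮ = S := Submodule.orthogonal_orthogonal S
  refine ⟨hclosed, hinvS, ?_, ?_⟩
  · -- compression isometric iff reducing
    constructor
    · intro hcomp
      refine ⟨hinvS, fun x hx => ?_⟩
      have h1 : ‖(Submodule.orthogonalProjectionOnto Sᗮ (V x) : HH)‖ = ‖V x‖ := by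
        rw [show ‖(Submodule.orthogonalProjectionOnto Sᗮ (V x) : HH)‖
            = ‖Submodule.orthogonalProjectionOnto Sᗮ (V x)‖ from rfl, hcomp x hx, V.norm_map]
      set y := V x with hy
      set w : HH := (Submodule.orthogonalProjectionOnto Sᗮ y : HH) with hw
      have hwmem : w ∈ Sᗮ := SetLike.coe_mem _
      have hsub : y - w ∈ Sᗮᗮ := Submodule.sub_starProjection_mem_orthogonal (K := Sᗮ) y
      have hinner0 : (inner ℂ w (y - w) : ℂ) = 0 :=
        Submodule.inner_right_of_mem_orthogonal hwmem hsub
      have hdec : y = w + (y - w) := by abel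
      have hnorm : ‖y‖ ^ 2 = ‖w‖ ^ 2 + ‖y - w‖ ^ 2 := by
        calc ‖y‖ ^ 2 = ‖w + (y - w)‖ ^ 2 := by rw [← hdec]
        _ = ‖w‖ ^ 2 + 2 * RCLike.re (inner ℂ w (y - w) : ℂ) + ‖y - w‖ ^ 2 :=
          norm_add_sq (𝕜 := ℂ) w (y - w)
        _ = ‖w‖ ^ 2 + ‖y - w‖ ^ 2 := by rw [hinner0]; simp
      have hz : ‖y - w‖ = 0 := by
        have h2 : ‖y‖ = ‖w‖ := h1.symm
        have h3 : ‖y - w‖ ^ 2 = 0 := by rw [h2] at hnorm; linarith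
        exact (pow_eq_zero_iff (two_ne_zero)).mp h3
      have : y = w := by
        have := norm_eq_zero.mp hz
        rw [sub_eq_zero] at this
        exact this
      rw [this]
      exact hwmem
    · rintro ⟨-, hperp⟩ x hx
      have h1 : (Submodule.orthogonalProjectionOnto Sᗮ (V x) : HH) = V x :=
        (Submodule.starProjection_eq_self_iff (K := Sᗮ)).mpr (hperp x hx)
      rw [show ‖Submodule.orthogonalProjectionOnto Sᗮ (V x)‖
          = ‖(Submodule.orthogonalProjectionOnto Sᗮ (V x) : HH)‖ from rfl, h1, V.norm_map]
  · -- reducing iff constants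
    constructor
    · rintro ⟨-, hperp⟩
      set a : H2 := M₁ e0 with ha
      set b : H2 := M₂ e0 with hb
      have hWe0S : Wl e0 ∈ S := by rw [hS_range]; exact ⟨e0, rfl⟩
      have huS : ((WithLp.linearEquiv 2 ℂ (H2 × H2)).symm (B a, B b) : HH) ∈ S := by
        rw [← hSbot]
        refine (Submodule.mem_orthogonal Sᗮ _).mpr fun x hx => ?_
        have hxa : (inner ℂ x ((WithLp.linearEquiv 2 ℂ (H2 × H2)).symm (B a, B b) : HH) : ℂ)
            = inner ℂ (Sh x.fst) a + inner ℂ (Sh x.snd) b := by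
          rw [WithLp.prod_inner_apply, WithLp.ofLp_fst, WithLp.ofLp_fst, WithLp.ofLp_snd, WithLp.ofLp_snd]
          rw [show ((WithLp.linearEquiv 2 ℂ (H2 × H2)).symm (B a, B b) : HH).fst = B a from rfl,
            show ((WithLp.linearEquiv 2 ℂ (H2 × H2)).symm (B a, B b) : HH).snd = B b from rfl,
            ← inner_sh Sh hSh, ← inner_sh Sh hSh]
        have hV0 : (inner ℂ (V x) (Wl e0) : ℂ) = 0 :=
          Submodule.inner_left_of_mem_orthogonal hWe0S (hperp x hx)
        rw [WithLp.prod_inner_apply, WithLp.ofLp_fst, WithLp.ofLp_fst, WithLp.ofLp_snd, WithLp.ofLp_snd, hVfst, hVsnd, hWfst, hWsnd] at hV0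
        exact hxa.trans hV0
      rw [hS_range] at huS
      obtain ⟨g, hg⟩ := huS
      have hg1 : M₁ g = B a := congrArg WithLp.fst hg
      have hg2 : M₂ g = B b := congrArg WithLp.snd hg
      set h : H2 := e0 - Sh g with hh
      have hh1 : M₁ h = a 0 • e0 := by
        rw [hh, map_sub, hcomm₁, hg1, sh_B Sh hSh a, ← ha]
        abel
      have hh2 : M₂ h = b 0 • e0 := by
        rw [hh, map_sub, hcomm₂, hg2, sh_B Sh hSh b, ← hb]
        abel
      set ρ : ℝ := ‖a 0‖ ^ 2 + ‖b 0‖ ^ 2 with hρ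
      have hρ0 : starRingEnd ℂ (h 0) = ((ρ : ℝ) : ℂ) := by
        have h4 := hWinner h e0
        rw [hh1, hh2, inner_smul_left, inner_smul_left, inner_e0_left, inner_e0_left,
          inner_e0_right] at h4
        rw [← h4, ← ha, ← hb, mul_comm ((starRingEnd ℂ) (a 0)), mul_comm ((starRingEnd ℂ) (b 0)),
          Complex.mul_conj, Complex.mul_conj, hρ, Complex.normSq_eq_norm_sq, Complex.normSq_eq_norm_sq]
        push_cast
        ring
      have hval : h 0 = ((ρ : ℝ) : ℂ) := by
        have h5 := congrArg (starRingEnd ℂ) hρ0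
        rwa [Complex.conj_conj, Complex.conj_ofReal] at h5
      have hperpSh : ∀ y : H2, (inner ℂ h (Sh y) : ℂ) = 0 := by
        intro y
        have h4 := hWinner h (Sh y)
        rw [hh1, hh2, hcomm₁, hcomm₂, inner_smul_left, inner_smul_left,
          inner_e0_left, inner_e0_left, (hSh (M₁ y)).1, (hSh (M₂ y)).1] at h4
        rw [← h4]
        ring
      have hhe : h = ((ρ : ℝ) : ℂ) • e0 := by
        have ht : Sh (B h) = h - ((ρ : ℝ) : ℂ) • e0 := by rw [sh_B Sh hSh h, hval]
        have hz : (inner ℂ (Sh (B h)) (Sh (B h)) : ℂ) = 0 := by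
          calc (inner ℂ (Sh (B h)) (Sh (B h)) : ℂ)
              = inner ℂ (h - ((ρ : ℝ) : ℂ) • e0) (Sh (B h)) := by rw [← ht]
            _ = inner ℂ h (Sh (B h))
                - starRingEnd ℂ ((ρ : ℝ) : ℂ) * inner ℂ e0 (Sh (B h)) := by
                rw [inner_sub_left, inner_smul_left]
            _ = 0 := by
                rw [hperpSh (B h), inner_e0_left, (hSh (B h)).1]
                ring
        have h5 : Sh (B h) = 0 := inner_self_eq_zero.mp hz
        rw [h5] at ht
        exact sub_eq_zero.mp ht.symm
      by_cases hρz : ρ = 0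
      · exfalso
        have h7 : h = 0 := by rw [hhe, hρz]; simp
        rw [hh] at h7
        have h8 : e0 = Sh g := sub_eq_zero.mp h7
        have h9 : (e0 : ℕ → ℂ) 0 = (Sh g : ℕ → ℂ) 0 := by rw [h8]
        rw [e0_apply_zero, (hSh g).1] at h9
        exact one_ne_zero h9
      · have hρc : ((ρ : ℝ) : ℂ) ≠ 0 := by exact_mod_cast hρz
        have h11 : ((ρ : ℝ) : ℂ) • a = a 0 • e0 := by rw [← hh1, hhe, map_smul, ← ha]
        have h12 : ((ρ : ℝ) : ℂ) • b = b 0 • e0 := by rw [← hh2, hhe, map_smul, ← hb]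
        have ha0 : a = (a 0 / ((ρ : ℝ) : ℂ)) • e0 := by
          calc a = ((ρ : ℝ) : ℂ)⁻¹ • (((ρ : ℝ) : ℂ) • a) := by
                rw [smul_smul, inv_mul_cancel₀ hρc, one_smul]
            _ = ((ρ : ℝ) : ℂ)⁻¹ • (a 0 • e0) := by rw [h11]
            _ = (a 0 / ((ρ : ℝ) : ℂ)) • e0 := by rw [smul_smul, div_eq_inv_mul]
        have hb0 : b = (b 0 / ((ρ : ℝ) : ℂ)) • e0 := by
          calc b = ((ρ : ℝ) : ℂ)⁻¹ • (((ρ : ℝ) : ℂ) • b) := by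
                rw [smul_smul, inv_mul_cancel₀ hρc, one_smul]
            _ = ((ρ : ℝ) : ℂ)⁻¹ • (b 0 • e0) := by rw [h12]
            _ = (b 0 / ((ρ : ℝ) : ℂ)) • e0 := by rw [smul_smul, div_eq_inv_mul]
        constructor
        · refine ⟨a 0 / ((ρ : ℝ) : ℂ), fun z hz => ?_⟩
          have h13 := hM₁ e0 z hz
          rw [tsum_e0, mul_one, ← ha] at h13
          rw [← h13]
          have h14 : ∀ n : ℕ, a n * z ^ n = (a 0 / ((ρ : ℝ) : ℂ)) * (e0 n * z ^ n) := by
            intro n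
            conv_lhs => rw [ha0]
            rw [lp.coeFn_smul, Pi.smul_apply, smul_eq_mul]
            ring
          rw [tsum_congr h14, tsum_mul_left, tsum_e0, mul_one]
        · refine ⟨b 0 / ((ρ : ℝ) : ℂ), fun z hz => ?_⟩
          have h13 := hM₂ e0 z hz
          rw [tsum_e0, mul_one, ← hb] at h13
          rw [← h13]
          have h14 : ∀ n : ℕ, b n * z ^ n = (b 0 / ((ρ : ℝ) : ℂ)) * (e0 n * z ^ n) := by
            intro n
            conv_lhs => rw [hb0]
            rw [lp.coeFn_smul, Pi.smul_apply, smul_eq_mul]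
            ring
          rw [tsum_congr h14, tsum_mul_left, tsum_e0, mul_one]
    · rintro ⟨⟨c₁, hc₁⟩, ⟨c₂, hc₂⟩⟩
      have hM₁c : ∀ f : H2, M₁ f = c₁ • f := by
        intro f
        apply coeff_eq
        intro z hz
        rw [hM₁ f z hz, hc₁ z hz]
        have h1 : ∀ n : ℕ, ((c₁ • f : H2)) n * z ^ n = c₁ * (f n * z ^ n) := by
          intro n
          rw [lp.coeFn_smul, Pi.smul_apply, smul_eq_mul]
          ring
        rw [tsum_congr h1, tsum_mul_left]
      have hM₂c : ∀ f : H2, M₂ f = c₂ • f := by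
        intro f
        apply coeff_eq
        intro z hz
        rw [hM₂ f z hz, hc₂ z hz]
        have h1 : ∀ n : ℕ, ((c₂ • f : H2)) n * z ^ n = c₂ * (f n * z ^ n) := by
          intro n
          rw [lp.coeFn_smul, Pi.smul_apply, smul_eq_mul]
          ring
        rw [tsum_congr h1, tsum_mul_left]
      refine ⟨hinvS, fun x hx => ?_⟩
      have hkey : (starRingEnd ℂ c₁) • x.fst + (starRingEnd ℂ c₂) • x.snd = 0 := by
        have hx' := (Submodule.mem_orthogonal S x).mp hx
          (Wl ((starRingEnd ℂ c₁) • x.fst + (starRingEnd ℂ c₂) • x.snd))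
          (by rw [hS_range]; exact ⟨_, rfl⟩)
        rw [WithLp.prod_inner_apply, WithLp.ofLp_fst, WithLp.ofLp_fst, WithLp.ofLp_snd, WithLp.ofLp_snd, hWfst, hWsnd, hM₁c, hM₂c,
          inner_smul_left, inner_smul_left] at hx'
        refine inner_self_eq_zero (𝕜 := ℂ) |>.mp ?_
        rw [inner_add_right, inner_smul_right, inner_smul_right]
        exact hx'
      refine (Submodule.mem_orthogonal S (V x)).mpr fun u hu => ?_
      rw [hS_range] at hu
      obtain ⟨f, rfl⟩ := hu
      rw [WithLp.prod_inner_apply, WithLp.ofLp_fst, WithLp.ofLp_fst, WithLp.ofLp_snd, WithLp.ofLp_snd, hWfst, hWsnd, hM₁c, hM₂c, hVfst, hVsnd,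
        inner_smul_left, inner_smul_left]
      have h2 : (starRingEnd ℂ c₁) • Sh x.fst + (starRingEnd ℂ c₂) • Sh x.snd = 0 := by
        rw [← map_smul, ← map_smul, ← map_add, hkey, map_zero]
      calc starRingEnd ℂ c₁ * inner ℂ f (Sh x.fst) + starRingEnd ℂ c₂ * inner ℂ f (Sh x.snd)
          = inner ℂ f ((starRingEnd ℂ c₁) • Sh x.fst + (starRingEnd ℂ c₂) • Sh x.snd) := by
            rw [inner_add_right, inner_smul_right, inner_smul_right]
        _ = 0 := by rw [h2, inner_zero_right]
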